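/- arXiv:1311.1363 — 3 statements merged into one kernel-verified Lean document; each statement's English description precedes it below -/
import Mathlib

section
/- Let n be a positive integer, x : Fin n → ℤ with x l ≠ 0 for all l, and y ∈ ℤ. The map sending an antipodal vector a : Fin n → ℤ (with a l ∈ {-1,1} for all l) to the binary vector b defined by b l = (sign(x l) * a l + 1)/2 is a bijection between the set of antipodal vectors a satisfying y = ∑ l, a l * x l and the set of binary vectors b : Fin n → ℤ (with b l ∈ {0,1}) satisfying (y + ∑ l, |x l|)/2 = ∑ l, b l * |x l| (where the latter equation is interpreted as y + ∑ l, |x l| = 2 * ∑ l, b l * |x l|). -/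
private lemma sgn_cases {z : ℤ} (hz : z ≠ 0) : Int.sign z = 1 ∨ Int.sign z = -1 := by
  rcases hz.lt_or_gt with h | h
  · right; exact Int.sign_eq_neg_one_of_neg h
  · left; exact Int.sign_eq_one_of_pos h

theorem kpa_eve_ssp_bijection (n : ℕ) (hn : 0 < n) (x : Fin n → ℤ)
    (hx : ∀ l, x l ≠ 0) (y : ℤ) :
    Set.BijOn (fun (a : Fin n → ℤ) (l : Fin n) => (Int.sign (x l) * a l + 1) / 2)
      {a : Fin n → ℤ | (∀ l, a l = -1 ∨ a l = 1) ∧ y = ∑ l, a l * x l}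
      {b : Fin n → ℤ | (∀ l, b l = 0 ∨ b l = 1) ∧
        y + ∑ l, |x l| = 2 * ∑ l, b l * |x l|} := by
  have hs := fun l => sgn_cases (hx l)
  have hsx : ∀ l, Int.sign (x l) * x l = |x l| := by
    intro l
    have h1 := Int.sign_mul_abs (x l)
    calc Int.sign (x l) * x l = Int.sign (x l) * (Int.sign (x l) * |x l|) := by rw [h1]
      _ = (Int.sign (x l) * Int.sign (x l)) * |x l| := by ring
      _ = |x l| := by rcases hs l with h | h <;> rw [h] <;> ring
  refine ⟨?_, ?_, ?_⟩
  · rintro a ⟨ha, hsum⟩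
    constructor
    · intro l
      rcases hs l with h | h <;> rcases ha l with h' | h' <;>
        simp only [h, h'] <;> decide
    · have key : ∀ l, 2 * ((Int.sign (x l) * a l + 1) / 2 * |x l|)
          = a l * x l + |x l| := by
        intro l
        have h1 : Int.sign (x l) * |x l| = x l := Int.sign_mul_abs (x l)
        have h2 : 2 * ((Int.sign (x l) * a l + 1) / 2) = Int.sign (x l) * a l + 1 := by
          rcases hs l with h | h <;> rcases ha l with h' | h' <;> simp [h, h']
        calc 2 * ((Int.sign (x l) * a l + 1) / 2 * |x l|)
            = (2 * ((Int.sign (x l) * a l + 1) / 2)) * |x l| := by ring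
          _ = (Int.sign (x l) * a l + 1) * |x l| := by rw [h2]
          _ = a l * (Int.sign (x l) * |x l|) + |x l| := by ring
          _ = a l * x l + |x l| := by rw [h1]
      calc y + ∑ l, |x l| = ∑ l, (a l * x l + |x l|) := by
            rw [Finset.sum_add_distrib, hsum]
        _ = ∑ l, 2 * ((Int.sign (x l) * a l + 1) / 2 * |x l|) :=
            Finset.sum_congr rfl fun l _ => (key l).symm
        _ = 2 * ∑ l, (Int.sign (x l) * a l + 1) / 2 * |x l| := by
            rw [Finset.mul_sum]
  · rintro a ⟨ha, _⟩ a' ⟨ha', _⟩ h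
    funext l
    have hl := congrFun h l
    rcases hs l with h1 | h1 <;> rcases ha l with h2 | h2 <;> rcases ha' l with h3 | h3 <;>
      simp only [h1, h2, h3] at hl ⊢ <;> omega
  · rintro b ⟨hb, hsum⟩
    refine ⟨fun l => Int.sign (x l) * (2 * b l - 1), ⟨?_, ?_⟩, ?_⟩
    · intro l
      rcases hs l with h | h <;> rcases hb l with h' | h' <;>
        simp only [h, h'] <;> decide
    · have key : ∀ l, Int.sign (x l) * (2 * b l - 1) * x l
          = 2 * (b l * |x l|) - |x l| := by
        intro l
        calc Int.sign (x l) * (2 * b l - 1) * x l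
            = (2 * b l - 1) * (Int.sign (x l) * x l) := by ring
          _ = (2 * b l - 1) * |x l| := by rw [hsx l]
          _ = 2 * (b l * |x l|) - |x l| := by ring
      rw [Finset.sum_congr rfl fun l _ => key l, Finset.sum_sub_distrib, ← Finset.mul_sum]
      omega
    · funext l
      rcases hs l with h | h <;> rcases hb l with h' | h' <;>
        simp only [h, h'] <;> norm_num
end

section
/- Let n ≥ 1, L ≥ 1 be integers, x : Fin n → ℤ with 1 ≤ |x l| ≤ L for all l, a⁰ : Fin n → ℤ antipodal, c an integer with 0 ≤ c ≤ n, and ε ∈ ℤ. The map sending an antipodal vector a¹ : Fin n → ℤ to b : Fin n → ℤ with b l = (1 - a¹ l * a⁰ l)/2 is a bijection between the set of antipodal vectors a¹ such that ε = ∑ l, (a¹ l - a⁰ l) * x l and a¹ differs from a⁰ in exactly c entries, and the set of binary vectors b (entries in {0,1}) satisfying ε/2 + L·c = ∑ l, b l * (L - a⁰ l * x l) and ∑ l, b l = c (where the first equation is interpreted over ℤ after clearing the factor 2: ε + 2Lc = 2∑ l, b l(L - a⁰ l x l)). -/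
theorem kpa_steve_ssp_bijection (n : ℕ) (hn : 1 ≤ n) (L : ℤ) (hL : 1 ≤ L)
    (x : Fin n → ℤ) (hx : ∀ l, 1 ≤ |x l| ∧ |x l| ≤ L)
    (a0 : Fin n → ℤ) (ha0 : ∀ l, a0 l = -1 ∨ a0 l = 1)
    (c : ℤ) (hc0 : 0 ≤ c) (hcn : c ≤ n) (ε : ℤ) :
    Set.BijOn (fun (a1 : Fin n → ℤ) (l : Fin n) => (1 - a1 l * a0 l) / 2)
      {a1 : Fin n → ℤ | (∀ l, a1 l = -1 ∨ a1 l = 1) ∧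
        ε = ∑ l, (a1 l - a0 l) * x l ∧
        ((Finset.univ.filter (fun l => a1 l ≠ a0 l)).card : ℤ) = c}
      {b : Fin n → ℤ | (∀ l, b l = 0 ∨ b l = 1) ∧
        ε + 2 * L * c = 2 * ∑ l, b l * (L - a0 l * x l) ∧
        ∑ l, b l = c} := by
  constructor
  · -- MapsTo
    rintro a1 ⟨h1, h2, h3⟩
    have hb01 : ∀ l, (1 - a1 l * a0 l) / 2 = 0 ∨ (1 - a1 l * a0 l) / 2 = 1 := by
      intro l
      rcases h1 l with h | h <;> rcases ha0 l with h' | h' <;> rw [h, h'] <;> norm_num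
    refine ⟨hb01, ?_, ?_⟩
    · have key : ∀ l, 2 * ((1 - a1 l * a0 l) / 2 * (L - a0 l * x l))
          = 2 * L * ((1 - a1 l * a0 l) / 2) + (a1 l - a0 l) * x l := by
        intro l
        rcases h1 l with h | h <;> rcases ha0 l with h' | h' <;> rw [h, h'] <;> ring_nf <;> norm_num <;> ring
      have hsum : ∀ l, (1 - a1 l * a0 l) / 2 = if a1 l = a0 l then 0 else 1 := by
        intro l
        rcases h1 l with h | h <;> rcases ha0 l with h' | h' <;> rw [h, h'] <;> norm_num
      have hcard : (∑ l, (1 - a1 l * a0 l) / 2) = c := by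
        rw [← h3, Finset.card_filter]
        push_cast
        refine Finset.sum_congr rfl fun l _ => ?_
        rw [hsum l]; by_cases h : a1 l = a0 l <;> simp [h]
      calc ε + 2 * L * c = 2 * L * (∑ l, (1 - a1 l * a0 l) / 2) + ∑ l, (a1 l - a0 l) * x l := by
            rw [hcard, h2]; ring
        _ = ∑ l, (2 * L * ((1 - a1 l * a0 l) / 2) + (a1 l - a0 l) * x l) := by
            rw [Finset.sum_add_distrib, Finset.mul_sum]
        _ = ∑ l, 2 * ((1 - a1 l * a0 l) / 2 * (L - a0 l * x l)) := by
            exact (Finset.sum_congr rfl fun l _ => (key l).symm)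
        _ = 2 * ∑ l, (1 - a1 l * a0 l) / 2 * (L - a0 l * x l) := by rw [Finset.mul_sum]
    · have hsum : ∀ l, (1 - a1 l * a0 l) / 2 = if a1 l = a0 l then 0 else 1 := by
        intro l
        rcases h1 l with h | h <;> rcases ha0 l with h' | h' <;> rw [h, h'] <;> norm_num
      rw [← h3, Finset.card_filter]
      push_cast
      refine Finset.sum_congr rfl fun l _ => ?_
      rw [hsum l]; by_cases h : a1 l = a0 l <;> simp [h]
  constructor
  · -- InjOn
    rintro a1 ⟨h1, -, -⟩ a1' ⟨h1', -, -⟩ heq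
    funext l
    have h := congrFun heq l
    simp only at h
    have ha := ha0 l
    rcases h1 l with g | g <;> rcases h1' l with g' | g' <;> rcases ha with h' | h' <;>
      rw [g, g'] <;> rw [g, g', h'] at h <;> norm_num at h
  · -- SurjOn
    rintro b ⟨hb01, hb2, hb3⟩
    refine ⟨fun l => (1 - 2 * b l) * a0 l, ⟨?_, ?_, ?_⟩, ?_⟩
    · intro l
      rcases hb01 l with h | h <;> rcases ha0 l with h' | h' <;> simp [h, h']
    · have key : ∀ l, ((1 - 2 * b l) * a0 l - a0 l) * x l
          = 2 * (b l * (L - a0 l * x l)) - 2 * L * b l := by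
        intro l
        rcases ha0 l with h' | h' <;> rw [h'] <;> ring
      calc ε = (ε + 2 * L * c) - 2 * L * c := by ring
        _ = 2 * ∑ l, b l * (L - a0 l * x l) - 2 * L * ∑ l, b l := by rw [← hb2, hb3]
        _ = ∑ l, (2 * (b l * (L - a0 l * x l)) - 2 * L * b l) := by
            rw [Finset.sum_sub_distrib, ← Finset.mul_sum, ← Finset.mul_sum]
        _ = ∑ l, ((1 - 2 * b l) * a0 l - a0 l) * x l := by
            exact (Finset.sum_congr rfl fun l _ => (key l).symm)
    · rw [← hb3, Finset.card_filter]
      push_cast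
      refine Finset.sum_congr rfl fun l _ => ?_
      rcases hb01 l with h | h <;> rcases ha0 l with h' | h' <;> simp [h, h']
    · funext l
      rcases hb01 l with h | h <;> rcases ha0 l with h' | h' <;> simp [h, h']
end

section
/- For an integer L ≥ 1, the number of configurations (u₀, u₁, u₂, b₀, b₁, b₂) with u l ∈ {1,…,L} and b l ∈ {0,1} not all equal (i.e. (b₀,b₁,b₂) ∉ {(0,0,0),(1,1,1)}) satisfying ∑_{l : b l = 0} u l = ∑_{l : b l = 1} u l is exactly 3L(L-1). -/
lemma key_sum (L : ℕ) : ∑ x ∈ Finset.Icc 1 L, ∑ y ∈ Finset.Icc 1 L, ∑ z ∈ Finset.Icc 1 L,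
    (if x + y = z then (1:ℕ) else 0) = ∑ i ∈ Finset.range L, i := by
  have h1 : ∀ x ∈ Finset.Icc 1 L, ∑ y ∈ Finset.Icc 1 L, ∑ z ∈ Finset.Icc 1 L,
      (if x + y = z then (1:ℕ) else 0) = L - x := by
    intro x hx
    rw [Finset.mem_Icc] at hx
    have h2 : ∀ y ∈ Finset.Icc 1 L, ∑ z ∈ Finset.Icc 1 L, (if x + y = z then (1:ℕ) else 0)
        = if x + y ≤ L then 1 else 0 := by
      intro y hy
      rw [Finset.mem_Icc] at hy
      rw [Finset.sum_ite_eq]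
      simp only [Finset.mem_Icc]
      apply if_congr _ rfl rfl
      omega
    rw [Finset.sum_congr rfl h2, ← Finset.card_filter]
    have : Finset.filter (fun y => x + y ≤ L) (Finset.Icc 1 L) = Finset.Icc 1 (L - x) := by
      ext y
      simp only [Finset.mem_filter, Finset.mem_Icc]
      omega
    rw [this, Nat.card_Icc]
    omega
  rw [Finset.sum_congr rfl h1]
  rw [show Finset.Icc 1 L = Finset.Ico 1 (L+1) by rw [Finset.Ico_add_one_right_eq_Icc]]
  rw [Finset.sum_Ico_eq_sum_range]
  simp only [Nat.add_sub_cancel]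
  rw [← Finset.sum_range_reflect]
  apply Finset.sum_congr rfl
  intro i hi
  rw [Finset.mem_range] at hi
  omega

lemma key_sumB (L : ℕ) : ∑ x ∈ Finset.Icc 1 L, ∑ y ∈ Finset.Icc 1 L, ∑ z ∈ Finset.Icc 1 L,
    (if x + z = y then (1:ℕ) else 0) = ∑ i ∈ Finset.range L, i := by
  rw [← key_sum L]
  exact Finset.sum_congr rfl fun x _ => Finset.sum_comm

lemma key_sumD (L : ℕ) : ∑ x ∈ Finset.Icc 1 L, ∑ y ∈ Finset.Icc 1 L, ∑ z ∈ Finset.Icc 1 L,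
    (if y + z = x then (1:ℕ) else 0) = ∑ i ∈ Finset.range L, i := by
  rw [Finset.sum_comm, ← key_sum L]
  exact Finset.sum_congr rfl fun x _ => Finset.sum_comm

theorem hamming_three_count (L : ℕ) (hL : 1 ≤ L) :
    ((((Finset.Icc 1 L) ×ˢ (Finset.Icc 1 L) ×ˢ (Finset.Icc 1 L)) ×ˢ
        (({0, 1} : Finset ℕ) ×ˢ ({0, 1} : Finset ℕ) ×ˢ ({0, 1} : Finset ℕ))).filter
        (fun q => ¬(q.2 = (0, 0, 0) ∨ q.2 = (1, 1, 1)) ∧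
          ((if q.2.1 = 0 then q.1.1 else 0) + (if q.2.2.1 = 0 then q.1.2.1 else 0)
            + (if q.2.2.2 = 0 then q.1.2.2 else 0)
          = (if q.2.1 = 1 then q.1.1 else 0) + (if q.2.2.1 = 1 then q.1.2.1 else 0)
            + (if q.2.2.2 = 1 then q.1.2.2 else 0)))).card = 3 * L * (L - 1) := by
  rw [Finset.card_filter, Finset.sum_product]
  simp only [Finset.sum_product, Finset.sum_pair (show (0:ℕ) ≠ 1 by norm_num),
    Prod.mk.injEq]
  norm_num
  have step : ∀ a b c : ℕ,
      ((if a + b = c then (1:ℕ) else 0) + ((if a + c = b then 1 else 0) + if a = b + c then 1 else 0) +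
        (((if b + c = a then 1 else 0) + if b = a + c then 1 else 0) + if c = a + b then 1 else 0))
      = (2 * if a + b = c then 1 else 0) + ((2 * if a + c = b then 1 else 0)
          + (2 * if b + c = a then 1 else 0)) := by
    intro a b c
    have flip : ∀ p q : ℕ, (if p = q then (1:ℕ) else 0) = if q = p then 1 else 0 := by
      intro p q; simp [eq_comm]
    rw [flip a (b+c), flip b (a+c), flip c (a+b)]
    by_cases h1 : a + b = c <;> by_cases h2 : a + c = b <;> by_cases h3 : b + c = a <;>
      simp [h1, h2, h3, eq_comm]
  simp only [step]
  simp only [Finset.sum_add_distrib, ← Finset.mul_sum]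
  rw [key_sum, key_sumB, key_sumD]
  rw [mul_assoc, ← Finset.sum_range_id_mul_two L]
  ring
end
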